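/- arXiv:2311.10209 — 5 statements merged into one kernel-verified Lean document; each statement's English description precedes it below -/
import Mathlib

section
/- If κ is an uncountable cardinal, then the space κ^ω can be written as a union of ℵ₁ many nowhere dense sets; in particular, cov(M_{κ^ω}) = ℵ₁, i.e., the least number of meager sets needed to cover κ^ω is ℵ₁. -/
open Cardinal Set PiNat Function

/-- If `K` is an uncountable discrete space, then `K^ω` is a union of `ℵ₁` many
nowhere dense sets, and the least number of meager sets needed to cover `K^ω` is
exactly `ℵ₁`. -/
theorem stmt_1 {K : Type*} [TopologicalSpace K] [DiscreteTopology K]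
    (hK : Cardinal.aleph0 < Cardinal.mk K) :
    (∃ F : Set (Set (ℕ → K)), Cardinal.mk F ≤ Cardinal.aleph 1 ∧
        (∀ s ∈ F, IsNowhereDense s) ∧ ⋃₀ F = Set.univ) ∧
    sInf {c : Cardinal | ∃ F : Set (Set (ℕ → K)),
        (∀ s ∈ F, IsMeagre s) ∧ ⋃₀ F = Set.univ ∧ Cardinal.mk F = c}
      = Cardinal.aleph 1 := by
  haveI : Nonempty K := by
    rw [← Cardinal.mk_ne_zero_iff]
    exact fun h => by simp [h] at hK
  haveI : BaireSpace (ℕ → K) := by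
    letI : MetricSpace (ℕ → K) := PiNat.metricSpace
    haveI : CompleteSpace (ℕ → K) := PiNat.completeSpace
    exact BaireSpace.of_completelyPseudoMetrizable
  -- choose a set S of size ℵ₁
  have h1 : Cardinal.aleph 1 ≤ Cardinal.mk K := by
    rw [← Cardinal.succ_aleph0]
    exact Order.succ_le_of_lt hK
  obtain ⟨S, hS⟩ := Cardinal.le_mk_iff_exists_set.1 h1
  -- the nowhere dense sets
  set N : K → Set (ℕ → K) := fun a => {x : ℕ → K | ∀ n, x n ≠ a} with hN
  have hclosed : ∀ a, IsClosed (N a) := by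
    intro a
    have : N a = ⋂ n, (fun x : ℕ → K => x n) ⁻¹' {a}ᶜ := by
      ext x; simp [hN]
    rw [this]
    exact isClosed_iInter fun n =>
      (isClosed_discrete ({a}ᶜ)).preimage (continuous_apply n)
  have hnwd : ∀ a, IsNowhereDense (N a) := by
    intro a
    rw [(hclosed a).isNowhereDense_iff]
    rw [eq_empty_iff_forall_notMem]
    intro x hx
    obtain ⟨v, ⟨y, n, rfl⟩, hxv, hvN⟩ :=
      PiNat.isTopologicalBasis_cylinders (E := fun _ : ℕ => K)
        |>.exists_subset_of_mem_open hx isOpen_interior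
    have h1 : Function.update x n a ∈ cylinder y n := by
      rw [← PiNat.mem_cylinder_iff_eq.1 hxv]
      exact PiNat.update_mem_cylinder x n a
    have h2 := interior_subset (hvN h1)
    exact h2 n (by simp)
  have hcover : ∀ x : ℕ → K, ∃ a ∈ S, x ∈ N a := by
    intro x
    have hr : ¬ (S ⊆ Set.range x) := by
      intro hsub
      have : S.Countable := (Set.countable_range x).mono hsub
      rw [Cardinal.countable_iff_lt_aleph_one, hS] at this
      exact lt_irrefl _ this
    obtain ⟨a, haS, har⟩ := Set.not_subset.1 hr
    exact ⟨a, haS, fun n hn => har ⟨n, hn⟩⟩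
  have hinj : Set.InjOn N S := by
    intro a _ b _ hab
    by_contra hne
    have : (fun _ : ℕ => b) ∈ N a := fun n h => hne h.symm
    rw [hab] at this
    exact this 0 rfl
  set F : Set (Set (ℕ → K)) := N '' S with hF
  have hFcard : Cardinal.mk F = Cardinal.aleph 1 := by
    rw [hF, Cardinal.mk_image_eq_of_injOn _ _ hinj, hS]
  have hFnwd : ∀ s ∈ F, IsNowhereDense s := by
    rintro s ⟨a, _, rfl⟩; exact hnwd a
  have hFcover : ⋃₀ F = Set.univ := by
    rw [eq_univ_iff_forall]
    intro x
    obtain ⟨a, haS, hx⟩ := hcover x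
    exact ⟨N a, ⟨a, haS, rfl⟩, hx⟩
  have hmeagre : ∀ s ∈ F, IsMeagre s := fun s hs =>
    isMeagre_iff_countable_union_isNowhereDense.2
      ⟨{s}, by simpa using hFnwd s hs, Set.countable_singleton s, by simp⟩
  refine ⟨⟨F, hFcard.le, hFnwd, hFcover⟩, ?_⟩
  apply le_antisymm
  · exact csInf_le' ⟨F, hmeagre, hFcover, hFcard⟩
  · refine le_csInf ⟨Cardinal.aleph 1, F, hmeagre, hFcover, hFcard⟩ ?_
    rintro c ⟨G, hGm, hGu, rfl⟩
    by_contra hlt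
    push_neg at hlt
    have hGc : G.Countable := (Cardinal.countable_iff_lt_aleph_one G).2 hlt
    have : IsMeagre (⋃₀ G) := by
      rw [IsMeagre, Set.compl_sUnion]
      exact (countable_sInter_mem (hGc.image _)).2
        (by rintro t ⟨s, hs, rfl⟩; exact hGm s hs)
    rw [hGu, IsMeagre, Set.compl_univ] at this
    exact absurd (dense_of_mem_residual this).nonempty (by simp)
end

section
/- Let X be a metric space and B a π-base for X. Then there exists a maximal cellular family S in X with S ⊆ B and |S| = w(X). -/
open Set TopologicalSpace Cardinal

/-- The weight of a topological space: the least cardinality of a topological basis. -/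
noncomputable def topWeight (X : Type*) [TopologicalSpace X] : Cardinal :=
  sInf {c : Cardinal | ∃ B : Set (Set X),
    TopologicalSpace.IsTopologicalBasis B ∧ Cardinal.mk B = c}

namespace Stmt9Aux

universe u
variable {X : Type u}

section Top
variable [TopologicalSpace X]

/-- cellular family whose members lie in `U` -/
def CellIn (U : Set X) (C : Set (Set X)) : Prop :=
  (∀ V ∈ C, IsOpen V ∧ V.Nonempty ∧ V ⊆ U) ∧ C.Pairwise Disjoint

def cellSet (U : Set X) : Set Cardinal.{u} :=
  {c | ∃ C : Set (Set X), CellIn U C ∧ #C = c}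

noncomputable def sCell (U : Set X) : Cardinal := sSup (cellSet U)

lemma cellSet_nonempty (U : Set X) : (cellSet U).Nonempty :=
  ⟨0, ∅, ⟨fun V hV => absurd hV (notMem_empty V), Set.pairwise_empty _⟩, mk_emptyCollection _⟩

lemma cellSet_bddAbove (U : Set X) : BddAbove (cellSet U) :=
  ⟨#(Set X), fun c hc => by obtain ⟨C, _, rfl⟩ := hc; exact mk_set_le C⟩

lemma exists_min_basis :
    ∃ b : Set (Set X), IsTopologicalBasis b ∧ #b = topWeight X := by
  have hne : {c : Cardinal | ∃ B : Set (Set X),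
      TopologicalSpace.IsTopologicalBasis B ∧ Cardinal.mk B = c}.Nonempty :=
    ⟨_, {U : Set X | IsOpen U}, isTopologicalBasis_opens, rfl⟩
  obtain ⟨b, hb, hbc⟩ := csInf_mem hne
  exact ⟨b, hb, hbc⟩

lemma cell_le_weight {C : Set (Set X)} (hC : CellIn univ C) : #C ≤ topWeight X := by
  obtain ⟨b, hb, hbc⟩ := exists_min_basis (X := X)
  rw [← hbc]
  have h : ∀ V : C, ∃ u : b, (u : Set X).Nonempty ∧ (u : Set X) ⊆ (V : Set X) := by
    rintro ⟨V, hV⟩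
    obtain ⟨hVo, ⟨x, hx⟩, -⟩ := hC.1 V hV
    obtain ⟨u, hu, hxu, huV⟩ := hb.exists_subset_of_mem_open hx hVo
    exact ⟨⟨u, hu⟩, ⟨x, hxu⟩, huV⟩
  choose f hf1 hf2 using h
  apply mk_le_of_injective (f := f)
  rintro ⟨V, hV⟩ ⟨V', hV'⟩ hVV
  by_contra hne
  have hd := hC.2 hV hV' (by simpa using hne)
  obtain ⟨x, hx⟩ := hf1 ⟨V, hV⟩
  exact (hd.le_bot ⟨hf2 ⟨V, hV⟩ hx, by rw [hVV] at hx; exact hf2 ⟨V', hV'⟩ hx⟩ : x ∈ (⊥ : Set X)).elim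

lemma sCell_le_weight (U : Set X) : sCell U ≤ topWeight X := by
  apply csSup_le (cellSet_nonempty U)
  rintro c ⟨C, hC, rfl⟩
  exact cell_le_weight ⟨fun V hV => ⟨(hC.1 V hV).1, (hC.1 V hV).2.1, subset_univ V⟩, hC.2⟩

lemma sCell_mono {U U' : Set X} (h : U ⊆ U') : sCell U ≤ sCell U' :=
  csSup_le_csSup (cellSet_bddAbove U') (cellSet_nonempty U)
    (by rintro c ⟨C, ⟨h1, h2⟩, rfl⟩
        exact ⟨C, ⟨fun V hV => ⟨(h1 V hV).1, (h1 V hV).2.1, (h1 V hV).2.2.trans h⟩, h2⟩, rfl⟩)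

lemma exists_gt_of_lt_sCell {U : Set X} {c : Cardinal} (h : c < sCell U) :
    ∃ C : Set (Set X), CellIn U C ∧ c < #C := by
  by_contra hcon
  push_neg at hcon
  exact absurd (csSup_le (cellSet_nonempty U)
    (by rintro d ⟨C, hC, rfl⟩; exact hcon C hC)) (not_le.2 h)

lemma mem_cellSet {U : Set X} {C : Set (Set X)} (hC : CellIn U C) : #C ≤ sCell U :=
  le_csSup (cellSet_bddAbove U) ⟨C, hC, rfl⟩

def Homog (U : Set X) : Prop :=
  IsOpen U ∧ U.Nonempty ∧ ∀ W, W ⊆ U → IsOpen W → W.Nonempty → sCell W = sCell U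

lemma exists_homog {U : Set X} (hU : IsOpen U) (hne : U.Nonempty) :
    ∃ V, V ⊆ U ∧ Homog V := by
  set T : Set Cardinal.{u} := {c | ∃ W : Set X, (W ⊆ U ∧ IsOpen W ∧ W.Nonempty) ∧ sCell W = c}
    with hT
  have hTne : T.Nonempty := ⟨sCell U, U, ⟨subset_rfl, hU, hne⟩, rfl⟩
  obtain ⟨c, hcT, hmin⟩ := wellFounded_lt.has_min T hTne
  obtain ⟨W, ⟨hWU, hWo, hWne⟩, hWc⟩ := hcT
  refine ⟨W, hWU, hWo, hWne, fun W' hW' hW'o hW'ne => ?_⟩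
  have h1 : sCell W' ≤ sCell W := sCell_mono hW'
  have h2 : ¬ sCell W' < c := hmin _ ⟨W', ⟨hW'.trans hWU, hW'o, hW'ne⟩, rfl⟩
  rw [hWc] at h1 ⊢
  exact le_antisymm h1 (not_lt.1 h2)

lemma exists_maxHomog :
    ∃ H : Set (Set X), (∀ U ∈ H, Homog U) ∧ H.Pairwise Disjoint ∧
      (∀ V : Set X, IsOpen V → V.Nonempty → ∃ U ∈ H, (V ∩ U).Nonempty) := by
  set P : Set (Set (Set X)) := {H | (∀ U ∈ H, Homog U) ∧ H.Pairwise Disjoint} with hP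
  obtain ⟨H, hHmax⟩ := zorn_subset P (by
    intro c hcP hchain
    refine ⟨⋃₀ c, ⟨?_, ?_⟩, fun s hs => subset_sUnion_of_mem hs⟩
    · rintro U ⟨T, hTc, hUT⟩
      exact (hcP hTc).1 U hUT
    · intro U hU V hV hUV
      obtain ⟨T, hTc, hUT⟩ := hU
      obtain ⟨T', hT'c, hVT'⟩ := hV
      rcases hchain.total hTc hT'c with h | h
      · exact (hcP hT'c).2 (h hUT) hVT' hUV
      · exact (hcP hTc).2 hUT (h hVT') hUV)
  refine ⟨H, hHmax.1.1, hHmax.1.2, ?_⟩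
  intro V hVo hVne
  by_contra hcon
  push_neg at hcon
  obtain ⟨V', hV'V, hV'h⟩ := exists_homog hVo hVne
  have hins : insert V' H ∈ P := by
    constructor
    · rintro U (rfl | hU)
      · exact hV'h
      · exact hHmax.1.1 U hU
    · apply hHmax.1.2.insert
      intro U hU _
      have : V' ∩ U = ∅ := by
        apply eq_empty_of_subset_empty
        rw [← hcon U hU]
        exact inter_subset_inter_left U hV'V
      constructor
      · exact disjoint_iff_inter_eq_empty.2 this
      · exact (disjoint_iff_inter_eq_empty.2 this).symm
  have : V' ∈ H := hHmax.2 hins (subset_insert _ _) (mem_insert _ _)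
  have h2 := hcon V' this
  rw [inter_eq_self_of_subset_right hV'V] at h2
  exact hV'h.2.1.ne_empty h2

lemma union_cell {W : ℕ → Set X} (hdisj : ∀ n m, n ≠ m → Disjoint (W n) (W m))
    {Cn : ℕ → Set (Set X)} (hCn : ∀ n, CellIn (W n) (Cn n)) :
    CellIn (univ : Set X) (⋃ n, Cn n) := by
  constructor
  · rintro V hV
    rw [mem_iUnion] at hV
    obtain ⟨n, hn⟩ := hV
    exact ⟨((hCn n).1 V hn).1, ((hCn n).1 V hn).2.1, subset_univ _⟩
  · intro V hV V' hV' hne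
    rw [mem_iUnion] at hV hV'
    obtain ⟨n, hn⟩ := hV
    obtain ⟨m, hm⟩ := hV'
    rcases eq_or_ne n m with rfl | hnm
    · exact (hCn n).2 hn hm hne
    · exact Set.disjoint_of_subset ((hCn n).1 V hn).2.2 ((hCn m).1 V' hm).2.2 (hdisj n m hnm)

lemma union_cell_card {lam : ℕ → Cardinal.{u}} {Cn : ℕ → Set (Set X)}
    (h : ∀ n, lam n ≤ #(Cn n)) : (⨆ n, lam n) ≤ #(⋃ n, Cn n) := by
  apply ciSup_le
  intro n
  exact (h n).trans (mk_le_mk_of_subset (subset_iUnion Cn n))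

end Top

section Metric
variable [MetricSpace X]

lemma exists_net (n : ℕ) :
    ∃ D : Set X, (∀ x ∈ D, ∀ y ∈ D, x ≠ y → 1 / (n + 1 : ℝ) ≤ dist x y) ∧
      (∀ x : X, ∃ y ∈ D, dist x y < 1 / (n + 1 : ℝ)) := by
  set P : Set (Set X) := {S | ∀ x ∈ S, ∀ y ∈ S, x ≠ y → 1 / (n + 1 : ℝ) ≤ dist x y} with hP
  obtain ⟨D, hDmax⟩ := zorn_subset P (by
    intro c hcP hchain
    refine ⟨⋃₀ c, ?_, fun s hs => subset_sUnion_of_mem hs⟩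
    rintro x ⟨T, hTc, hxT⟩ y ⟨T', hT'c, hyT'⟩ hxy
    rcases hchain.total hTc hT'c with h | h
    · exact hcP hT'c x (h hxT) y hyT' hxy
    · exact hcP hTc x hxT y (h hyT') hxy)
  refine ⟨D, hDmax.1, ?_⟩
  intro x
  by_contra hcon
  push_neg at hcon
  have hins : insert x D ∈ P := by
    rintro a (rfl | haD) b (rfl | hbD) hab
    · exact absurd rfl hab
    · exact hcon b hbD
    · rw [dist_comm]; exact hcon a haD
    · exact hDmax.1 a haD b hbD hab
  have hxD : x ∈ D := hDmax.2 hins (subset_insert _ _) (mem_insert _ _)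
  have h1 := hcon x hxD
  rw [dist_self] at h1
  have : (0:ℝ) < 1 / (n+1 : ℝ) := by positivity
  linarith

open Metric in
lemma exists_lambda :
    ∃ lam : ℕ → Cardinal.{u}, (∀ n, ∃ C : Set (Set X), CellIn univ C ∧ #C = lam n) ∧
      (∀ n, lam n ≤ #X) ∧ topWeight X ≤ ℵ₀ * ⨆ n, lam n := by
  choose D hsep hdense using fun n => exists_net (X := X) n
  have hpos : ∀ n : ℕ, (0:ℝ) < 1 / (n+1) := fun n => by positivity
  refine ⟨fun n => #(D n), ?_, fun n => mk_set_le _, ?_⟩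
  · intro n
    have hrpos : (0:ℝ) < 1 / (2 * (n+1)) := by positivity
    have hrlt : 1 / (2 * (n+1:ℝ)) + 1 / (2 * (n+1:ℝ)) ≤ 1 / (n+1:ℝ) := by
      rw [← add_div]
      rw [div_le_div_iff₀ (by positivity) (by positivity)]
      ring_nf
      nlinarith [Nat.cast_nonneg (α := ℝ) n]
    refine ⟨(fun x => Metric.ball x (1 / (2 * (n + 1 : ℝ)))) '' D n, ⟨?_, ?_⟩, ?_⟩
    · rintro V ⟨x, hx, rfl⟩
      exact ⟨isOpen_ball, nonempty_ball.2 hrpos, subset_univ _⟩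
    · rintro V ⟨x, hx, rfl⟩ V' ⟨y, hy, rfl⟩ hne
      have hxy : x ≠ y := by rintro rfl; exact hne rfl
      rw [Set.disjoint_left]
      intro z hz1 hz2
      rw [mem_ball] at hz1 hz2
      have h1 := hsep n x hx y hy hxy
      have h2 : dist x y ≤ dist z x + dist z y := by
        rw [dist_comm z x]; exact dist_triangle x z y
      linarith
    · apply mk_image_eq_of_injOn
      intro x hx y hy hxy
      by_contra hne
      have h1 := hsep n x hx y hy hne
      have h2 : x ∈ Metric.ball y (1 / (2 * (n+1:ℝ))) := by
        have hme : x ∈ Metric.ball x (1 / (2 * (n+1:ℝ))) := mem_ball_self hrpos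
        simpa only [hxy] using hme
      rw [mem_ball] at h2
      linarith
  · set b0 : Set (Set X) := ⋃ n : ℕ, (fun d => Metric.ball d (3 / (n + 1 : ℝ))) '' D n with hb0
    have hbasis : IsTopologicalBasis b0 := by
      apply isTopologicalBasis_of_isOpen_of_nhds
      · intro u hu
        simp only [hb0, mem_iUnion, mem_image] at hu
        obtain ⟨n, d, hd, rfl⟩ := hu
        exact isOpen_ball
      · intro x u hxu hu
        obtain ⟨ε, hε, hball⟩ := Metric.isOpen_iff.1 hu x hxu
        obtain ⟨n, hn⟩ := exists_nat_one_div_lt (show (0:ℝ) < ε/4 by linarith)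
        obtain ⟨d, hd, hdist⟩ := hdense n x
        refine ⟨Metric.ball d (3 / (n+1:ℝ)), ?_, ?_, ?_⟩
        · simp only [hb0, mem_iUnion, mem_image]
          exact ⟨n, d, hd, rfl⟩
        · rw [mem_ball]
          have h4 : (0:ℝ) < (n:ℝ)+1 := by positivity
          have h3 : 3/(n+1:ℝ) = 3 * (1/(n+1:ℝ)) := by ring
          have := hpos n
          linarith [hdist]
        · intro z hz
          rw [mem_ball] at hz
          apply hball
          rw [mem_ball]
          have : dist z x ≤ dist z d + dist x d := by
            rw [dist_comm x d]; exact dist_triangle z d x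
          have h14 : 1/(n+1:ℝ) < ε/4 := hn
          have h4 : (0:ℝ) < (n:ℝ)+1 := by positivity
          have h3 : 3/(n+1:ℝ) = 3 * (1/(n+1:ℝ)) := by ring
          linarith [hdist]
    have h1 : topWeight X ≤ #b0 := csInf_le (OrderBot.bddBelow _) ⟨b0, hbasis, rfl⟩
    refine h1.trans ?_
    have hsurj : Function.Surjective
        (fun p : (Σ n : ULift.{u} ℕ, ↥(D n.down)) =>
          (⟨Metric.ball (p.2 : X) (3 / (p.1.down + 1 : ℝ)),
            mem_iUnion.2 ⟨p.1.down, mem_image_of_mem _ p.2.2⟩⟩ : ↥b0)) := by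
      rintro ⟨u, hu⟩
      simp only [hb0, mem_iUnion, mem_image] at hu
      obtain ⟨n, d, hd, rfl⟩ := hu
      exact ⟨⟨⟨n⟩, ⟨d, hd⟩⟩, rfl⟩
    have h2 : #b0 ≤ #(Σ n : ULift.{u} ℕ, ↥(D n.down)) := mk_le_of_surjective hsurj
    refine h2.trans ?_
    rw [mk_sigma]
    have hbdd : BddAbove (Set.range fun n => #(D n)) := by
      refine ⟨#X, ?_⟩
      rintro c ⟨n, rfl⟩
      exact mk_set_le _
    have h3 : (Cardinal.sum fun n : ULift.{u} ℕ => #(D n.down)) ≤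
        Cardinal.sum fun _ : ULift.{u} ℕ => ⨆ n, #(D n) :=
      Cardinal.sum_le_sum _ _ (fun i => le_ciSup hbdd i.down)
    refine h3.trans ?_
    rw [Cardinal.sum_const']
    apply mul_le_mul' ?_ le_rfl
    simp

open Metric in
lemma split_step {W : Set X} (hWo : IsOpen W) (hWinf : W.Infinite) :
    ∃ U W' : Set X, (IsOpen U ∧ U.Nonempty ∧ U ⊆ W) ∧ (IsOpen W' ∧ W'.Infinite ∧ W' ⊆ W) ∧
      Disjoint U W' := by
  obtain ⟨x, hx, y, hy, hxy⟩ := hWinf.nontrivial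
  obtain ⟨εx, hεx, hbx⟩ := Metric.isOpen_iff.1 hWo x hx
  obtain ⟨εy, hεy, hby⟩ := Metric.isOpen_iff.1 hWo y hy
  have hd : 0 < dist x y := dist_pos.2 hxy
  set ε := min (min εx εy) (dist x y / 3) with hε
  have hεpos : 0 < ε := lt_min (lt_min hεx hεy) (by linarith)
  have hεx' : ε ≤ εx := (min_le_left _ _).trans (min_le_left _ _)
  have hεy' : ε ≤ εy := (min_le_left _ _).trans (min_le_right _ _)
  have hεd : ε ≤ dist x y / 3 := min_le_right _ _
  by_cases hcase : (W ∩ Metric.ball x ε).Infinite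
  · refine ⟨Metric.ball y ε, W ∩ Metric.ball x ε,
      ⟨isOpen_ball, nonempty_ball.2 hεpos, (ball_subset_ball hεy').trans hby⟩,
      ⟨hWo.inter isOpen_ball, hcase, inter_subset_left⟩, ?_⟩
    rw [Set.disjoint_left]
    rintro z hz1 ⟨-, hz2⟩
    rw [mem_ball] at hz1 hz2
    have : dist x y ≤ dist z x + dist z y := by
      rw [dist_comm z x]; exact dist_triangle x z y
    linarith
  · refine ⟨Metric.ball x (ε/2), W ∩ {z | ε/2 < dist z x},
      ⟨isOpen_ball, nonempty_ball.2 (by linarith),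
        (ball_subset_ball (by linarith : ε/2 ≤ εx)).trans hbx⟩,
      ⟨hWo.inter (isOpen_lt continuous_const (continuous_id.dist continuous_const)),
        ?_, inter_subset_left⟩, ?_⟩
    · apply Set.Infinite.mono (s := W \ (W ∩ Metric.ball x ε))
      · intro z hz
        refine ⟨hz.1, ?_⟩
        have : z ∉ Metric.ball x ε := fun h => hz.2 ⟨hz.1, h⟩
        rw [mem_ball] at this
        push_neg at this
        simp only [mem_setOf_eq]
        linarith
      · exact hWinf.diff (Set.not_infinite.1 hcase)
    · rw [Set.disjoint_left]
      rintro z hz1 ⟨-, hz2⟩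
      rw [mem_ball] at hz1
      simp only [mem_setOf_eq] at hz2
      linarith

lemma exists_infinite_cell [Infinite X] :
    ∃ C : Set (Set X), CellIn (univ : Set X) C ∧ #C = ℵ₀ := by
  have key : ∀ W : {W : Set X // IsOpen W ∧ W.Infinite},
      ∃ p : Set X × {W' : Set X // IsOpen W' ∧ W'.Infinite},
        (IsOpen p.1 ∧ p.1.Nonempty ∧ p.1 ⊆ W.1) ∧ (p.2.1 ⊆ W.1) ∧ Disjoint p.1 p.2.1 := by
    rintro ⟨W, hWo, hWinf⟩
    obtain ⟨U, W', hU, hW', hdisj⟩ := split_step hWo hWinf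
    exact ⟨(U, ⟨W', hW'.1, hW'.2.1⟩), hU, hW'.2.2, hdisj⟩
  choose p hp1 hp2 hp3 using key
  let chain : ℕ → {W : Set X // IsOpen W ∧ W.Infinite} := fun n =>
    Nat.rec ⟨univ, isOpen_univ, Set.infinite_univ⟩ (fun _ W => (p W).2) n
  let U : ℕ → Set X := fun n => (p (chain n)).1
  have hchainsucc : ∀ n, (chain (n+1)).1 ⊆ (chain n).1 := fun n => hp2 (chain n)
  have hchain : ∀ n m, n ≤ m → (chain m).1 ⊆ (chain n).1 := by
    intro n m hnm
    induction m with
    | zero => rw [Nat.le_zero.1 hnm]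
    | succ k ih =>
      rcases Nat.lt_or_ge n (k+1) with h | h
      · exact (hchainsucc k).trans (ih (Nat.lt_succ_iff.1 h))
      · rw [Nat.le_antisymm hnm h]
  have hUsub : ∀ n, U n ⊆ (chain n).1 := fun n => (hp1 (chain n)).2.2
  have hUne : ∀ n, (U n).Nonempty := fun n => (hp1 (chain n)).2.1
  have hUo : ∀ n, IsOpen (U n) := fun n => (hp1 (chain n)).1
  have hdisj : ∀ n m, n < m → Disjoint (U n) (U m) := by
    intro n m hnm
    have : U m ⊆ (chain (n+1)).1 := (hUsub m).trans (hchain (n+1) m hnm)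
    exact Set.disjoint_of_subset_right this (hp3 (chain n))
  have hUinj : Function.Injective U := by
    intro n m hnm
    by_contra hne
    have hd : Disjoint (U n) (U m) := by
      rcases Nat.lt_or_ge n m with h | h
      · exact hdisj n m h
      · exact (hdisj m n (lt_of_le_of_ne h (Ne.symm hne))).symm
    rw [hnm, disjoint_self] at hd
    exact (hUne m).ne_empty hd
  refine ⟨Set.range U, ⟨?_, ?_⟩, ?_⟩
  · rintro V ⟨n, rfl⟩
    exact ⟨hUo n, hUne n, subset_univ _⟩
  · rintro V ⟨n, rfl⟩ V' ⟨m, rfl⟩ hne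
    have hnm : n ≠ m := by rintro rfl; exact hne rfl
    rcases Nat.lt_or_ge n m with h | h
    · exact hdisj n m h
    · exact (hdisj m n (lt_of_le_of_ne h (Ne.symm hnm))).symm
  · have h1 : (Set.range U).Countable := Set.countable_range U
    have h2 : (Set.range U).Infinite := Set.infinite_range_of_injective hUinj
    exact le_antisymm ((Cardinal.mk_le_aleph0_iff).2 h1)
      ((Cardinal.infinite_iff).1 h2.to_subtype)

lemma finite_case [Finite X] :
    ∃ C : Set (Set X), CellIn (univ : Set X) C ∧ #C = topWeight X := by
  have hdisc : DiscreteTopology X := inferInstance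
  have hge : (#X : Cardinal) ≤ topWeight X := by
    have hne0 : {c : Cardinal | ∃ B : Set (Set X),
        TopologicalSpace.IsTopologicalBasis B ∧ Cardinal.mk B = c}.Nonempty :=
      ⟨_, {U : Set X | IsOpen U}, isTopologicalBasis_opens, rfl⟩
    apply le_csInf hne0
    rintro c ⟨b, hb, rfl⟩
    have h : ∀ x : X, ∃ u : b, (u : Set X) = {x} := by
      intro x
      obtain ⟨u, hu, hxu, hux⟩ := hb.exists_subset_of_mem_open (mem_singleton x)
        (isOpen_discrete ({x} : Set X))
      exact ⟨⟨u, hu⟩, le_antisymm hux (singleton_subset_iff.2 hxu)⟩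
    choose f hf using h
    apply mk_le_of_injective (f := f)
    intro x y hxy
    apply Set.singleton_injective
    rw [← hf x, ← hf y, hxy]
  have hrange : #(Set.range (fun x : X => ({x} : Set X))) = #X :=
    mk_range_eq _ Set.singleton_injective
  have hbasis : IsTopologicalBasis (Set.range (fun x : X => ({x} : Set X))) := by
    apply isTopologicalBasis_of_isOpen_of_nhds
    · rintro u ⟨x, rfl⟩; exact isOpen_discrete _
    · intro x u hxu _
      exact ⟨{x}, ⟨x, rfl⟩, mem_singleton x, singleton_subset_iff.2 hxu⟩
  have hle : topWeight X ≤ #X := by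
    have hmem : #(Set.range (fun x : X => ({x} : Set X))) ∈
        {c : Cardinal | ∃ B : Set (Set X),
          TopologicalSpace.IsTopologicalBasis B ∧ Cardinal.mk B = c} :=
      ⟨Set.range (fun x : X => ({x} : Set X)), hbasis, rfl⟩
    have := csInf_le (OrderBot.bddBelow _) hmem
    rwa [hrange] at this
  have heq : topWeight X = #X := le_antisymm hle hge
  refine ⟨Set.range (fun x : X => ({x} : Set X)), ⟨?_, ?_⟩, by rw [hrange, heq]⟩
  · rintro V ⟨x, rfl⟩; exact ⟨isOpen_discrete _, singleton_nonempty x, subset_univ _⟩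
  · rintro V ⟨x, rfl⟩ V' ⟨y, rfl⟩ hne
    have hxy : x ≠ y := by rintro rfl; exact hne rfl
    exact Set.disjoint_singleton.2 hxy

lemma aleph0_le_weight [Infinite X] : ℵ₀ ≤ topWeight X := by
  have hne0 : {c : Cardinal | ∃ B : Set (Set X),
      TopologicalSpace.IsTopologicalBasis B ∧ Cardinal.mk B = c}.Nonempty :=
    ⟨_, {U : Set X | IsOpen U}, isTopologicalBasis_opens, rfl⟩
  apply le_csInf hne0
  rintro c ⟨b, hb, rfl⟩
  rw [← Cardinal.infinite_iff]
  by_contra hfin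
  rw [not_infinite_iff_finite] at hfin
  have hm : Function.Injective (fun x : X => {u : b | x ∈ (u : Set X)}) := by
    intro x y hxy
    by_contra hne
    obtain ⟨u, hu, hxu, hsub⟩ := hb.exists_subset_of_mem_open
      (show x ∈ ({y}ᶜ : Set X) from hne) (isOpen_compl_singleton)
    have hx : (⟨u, hu⟩ : b) ∈ {w : b | x ∈ (w : Set X)} := hxu
    rw [show {w : b | x ∈ (w : Set X)} = {w : b | y ∈ (w : Set X)} from hxy] at hx
    exact hsub hx rfl
  have hfinX : Finite X := Finite.of_injective _ hm
  exact (not_finite_iff_infinite.2 inferInstance) hfinX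

lemma exists_cell_weight :
    ∃ C : Set (Set X), CellIn (univ : Set X) C ∧ #C = topWeight X := by
  cases finite_or_infinite X with
  | inl h => exact finite_case
  | inr h =>
    have hℵ : ℵ₀ ≤ topWeight X := aleph0_le_weight
    rcases eq_or_lt_of_le hℵ with heq | hlt
    · obtain ⟨C, hC, hCc⟩ := exists_infinite_cell (X := X)
      exact ⟨C, hC, by rw [hCc, ← heq]⟩
    · set κ := topWeight X with hκ
      obtain ⟨lam, hlam, hlamX, hwle⟩ := exists_lambda (X := X)
      have hbddlam : BddAbove (Set.range lam) := ⟨#X, by rintro c ⟨n, rfl⟩; exact hlamX n⟩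
      have hlamle : ∀ n, lam n ≤ κ := by
        intro n; obtain ⟨C, hC, hCc⟩ := hlam n; rw [← hCc]; exact cell_le_weight hC
      have hsupk : κ ≤ ⨆ n, lam n := by
        rcases le_or_gt (⨆ n, lam n) ℵ₀ with hle | hgt
        · exfalso
          have h1 : κ ≤ ℵ₀ * ℵ₀ := hwle.trans (mul_le_mul' le_rfl hle)
          rw [Cardinal.aleph0_mul_aleph0] at h1
          exact absurd h1 (not_le.2 hlt)
        · have h2 : ℵ₀ * (⨆ n, lam n) ≤ ⨆ n, lam n := by
            calc ℵ₀ * (⨆ n, lam n) ≤ max ℵ₀ (⨆ n, lam n) :=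
                  mul_le_max_of_aleph0_le_left le_rfl
            _ = ⨆ n, lam n := max_eq_right hgt.le
          exact hwle.trans h2
      by_cases hattain : ∃ n, lam n = κ
      · obtain ⟨n, hn⟩ := hattain
        obtain ⟨C, hC, hCc⟩ := hlam n
        exact ⟨C, hC, by rw [hCc, hn]⟩
      push_neg at hattain
      have hlamlt : ∀ n, lam n < κ := fun n => lt_of_le_of_ne (hlamle n) (hattain n)
      obtain ⟨H, hHhom, hHdisj, hHmeet⟩ := exists_maxHomog (X := X)
      have hHcell : CellIn (univ : Set X) H :=
        ⟨fun U hU => ⟨(hHhom U hU).1, (hHhom U hU).2.1, subset_univ _⟩, hHdisj⟩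
      by_cases hHκ : #H = κ
      · exact ⟨H, hHcell, hHκ⟩
      have hHlt : #H < κ := lt_of_le_of_ne (cell_le_weight hHcell) hHκ
      by_cases hUκ : ∃ U ∈ H, sCell U = κ
      · obtain ⟨U, hUH, hsU⟩ := hUκ
        have hα : ℵ₀ < sCell U := by rw [hsU]; exact hlt
        obtain ⟨C0, hC0, hC0c⟩ := exists_gt_of_lt_sCell hα
        have hC0inf : Infinite ↥C0 := (Cardinal.infinite_iff).2 hC0c.le
        let emb := Infinite.natEmbedding ↥C0
        let W : ℕ → Set X := fun n => ((emb n : ↥C0) : Set X)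
        have hWmem : ∀ n, W n ∈ C0 := fun n => (emb n).2
        have hWU : ∀ n, W n ⊆ U := fun n => (hC0.1 _ (hWmem n)).2.2
        have hWo : ∀ n, IsOpen (W n) := fun n => (hC0.1 _ (hWmem n)).1
        have hWne : ∀ n, (W n).Nonempty := fun n => (hC0.1 _ (hWmem n)).2.1
        have hWdisj : ∀ n m, n ≠ m → Disjoint (W n) (W m) := by
          intro n m hnm
          apply hC0.2 (hWmem n) (hWmem m)
          intro hWeq
          exact hnm (emb.injective (Subtype.ext hWeq))
        have hhom := (hHhom U hUH).2.2
        have hsW : ∀ n, sCell (W n) = κ := fun n => by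
          rw [hhom (W n) (hWU n) (hWo n) (hWne n), hsU]
        have hCn : ∀ n, ∃ Cn : Set (Set X), CellIn (W n) Cn ∧ lam n < #Cn := by
          intro n
          have : lam n < sCell (W n) := by rw [hsW n]; exact hlamlt n
          exact exists_gt_of_lt_sCell this
        choose Cn hCn1 hCn2 using hCn
        refine ⟨⋃ n, Cn n, union_cell hWdisj hCn1,
          le_antisymm (cell_le_weight (union_cell hWdisj hCn1))
            (hsupk.trans (union_cell_card (fun n => (hCn2 n).le)))⟩
      · push_neg at hUκ
        have hsUlt : ∀ U ∈ H, sCell U < κ := fun U hU =>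
          lt_of_le_of_ne (sCell_le_weight U) (hUκ U hU)
        have claim : ∀ c : Cardinal, c < κ → ∃ U ∈ H, c < sCell U := by
          intro c hc
          by_contra hcon
          push_neg at hcon
          have hmax : max (max #H c) ℵ₀ < κ := by
            rw [max_lt_iff, max_lt_iff]
            exact ⟨⟨hHlt, hc⟩, hlt⟩
          have hlt2 : max (max #H c) ℵ₀ < ⨆ n, lam n := lt_of_lt_of_le hmax hsupk
          obtain ⟨n, hn⟩ := (lt_ciSup_iff hbddlam).1 hlt2
          obtain ⟨C, hC, hCc⟩ := hlam n
          have hF : ∀ V : ↥C, ∃ Uu : ↥H, ((V : Set X) ∩ (Uu : Set X)).Nonempty := by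
            rintro ⟨V, hV⟩
            obtain ⟨Uu, hUu, hne2⟩ := hHmeet V (hC.1 V hV).1 (hC.1 V hV).2.1
            exact ⟨⟨Uu, hUu⟩, hne2⟩
          choose G hG using hF
          have h1 : #(↥C) = Cardinal.sum (fun Uu : ↥H => #{V : ↥C // G V = Uu}) := by
            rw [← Cardinal.mk_sigma]
            exact mk_congr (Equiv.sigmaFiberEquiv G).symm
          have h2 : ∀ Uu : ↥H, #{V : ↥C // G V = Uu} ≤ c := by
            intro Uu
            set CU : Set (Set X) :=
              {Z | ∃ V : ↥C, G V = Uu ∧ Z = (V : Set X) ∩ (Uu : Set X)} with hCUdef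
            have hCUcell : CellIn (Uu : Set X) CU := by
              constructor
              · rintro Z ⟨V, hGV, rfl⟩
                refine ⟨((hC.1 V V.2).1).inter (hHhom Uu Uu.2).1, ?_, inter_subset_right⟩
                have := hG V
                rw [hGV] at this
                exact this
              · rintro Z ⟨V, hGV, rfl⟩ Z' ⟨V', hGV', rfl⟩ hne2
                have hVV : (V : Set X) ≠ (V' : Set X) := by
                  intro heq2
                  exact hne2 (by rw [heq2])
                exact (hC.2 V.2 V'.2 hVV).mono inter_subset_left inter_subset_left
            have hinj : Function.Injective
                (fun V : {V : ↥C // G V = Uu} =>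
                  (⟨((V : ↥C) : Set X) ∩ (Uu : Set X), V.1, V.2, rfl⟩ : ↥CU)) := by
              rintro ⟨V, hV⟩ ⟨V', hV'⟩ heq2
              simp only [Subtype.mk.injEq] at heq2 ⊢
              by_contra hne2
              have hVV : (V : Set X) ≠ (V' : Set X) := by
                intro heq3
                exact hne2 (Subtype.ext heq3)
              have hd := (hC.2 V.2 V'.2 hVV).mono
                (inter_subset_left : (V : Set X) ∩ (Uu : Set X) ⊆ (V : Set X))
                (inter_subset_left : (V' : Set X) ∩ (Uu : Set X) ⊆ (V' : Set X))
              rw [heq2, disjoint_self] at hd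
              have := hG V'
              rw [hV'] at this
              exact this.ne_empty hd
            have h5 : #{V : ↥C // G V = Uu} ≤ #(↥CU) := mk_le_of_injective hinj
            have h6 : #(↥CU) ≤ sCell (Uu : Set X) := mem_cellSet hCUcell
            exact h5.trans (h6.trans (hcon Uu Uu.2))
          have h3 : #(↥C) ≤ #H * c := by
            rw [h1]
            calc Cardinal.sum (fun Uu : ↥H => #{V : ↥C // G V = Uu})
                ≤ Cardinal.sum (fun _ : ↥H => c) := Cardinal.sum_le_sum _ _ h2
            _ = #H * c := Cardinal.sum_const' _ _
          have h4 : #H * c ≤ max (max #H c) ℵ₀ := Cardinal.mul_le_max _ _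
          rw [hCc] at h3
          exact absurd (h3.trans h4) (not_le.2 hn)
        have hstep : ∀ (n : ℕ) (Uu : {U : Set X // U ∈ H}),
            ∃ U' : {U : Set X // U ∈ H}, max (lam (n+1)) (sCell Uu.1) < sCell U'.1 := by
          intro n Uu
          have h1 : max (lam (n+1)) (sCell Uu.1) < κ := max_lt (hlamlt (n+1)) (hsUlt Uu.1 Uu.2)
          obtain ⟨U', hU'H, hU'⟩ := claim _ h1
          exact ⟨⟨U', hU'H⟩, hU'⟩
        choose step hstepspec using hstep
        obtain ⟨U0, hU0H, hU0⟩ := claim (lam 0) (hlamlt 0)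
        let g : ℕ → {U : Set X // U ∈ H} := fun n => Nat.rec ⟨U0, hU0H⟩ step n
        have hgsucc : ∀ n, max (lam (n+1)) (sCell (g n).1) < sCell (g (n+1)).1 :=
          fun n => hstepspec n (g n)
        have hglam : ∀ n, lam n < sCell (g n).1 := by
          intro n
          cases n with
          | zero => exact hU0
          | succ k => exact (le_max_left _ _).trans_lt (hgsucc k)
        have hgmono : ∀ n m, n < m → sCell (g n).1 < sCell (g m).1 := by
          intro n m hnm
          induction m with
          | zero => omega
          | succ k ih =>
            have hk : sCell (g k).1 < sCell (g (k+1)).1 := (le_max_right _ _).trans_lt (hgsucc k)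
            rcases Nat.lt_or_ge n k with hlt3 | hge3
            · exact (ih hlt3).trans hk
            · have : n = k := by omega
              rw [this]; exact hk
        have hginj : ∀ n m, n ≠ m → (g n).1 ≠ (g m).1 := by
          intro n m hnm heq2
          rcases Nat.lt_or_ge n m with hlt3 | hge3
          · have := hgmono n m hlt3
            rw [heq2] at this
            exact lt_irrefl _ this
          · have := hgmono m n (by omega)
            rw [heq2] at this
            exact lt_irrefl _ this
        have hCn : ∀ n, ∃ Cn : Set (Set X), CellIn ((g n).1) Cn ∧ lam n < #Cn :=
          fun n => exists_gt_of_lt_sCell (hglam n)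
        choose Cn hCn1 hCn2 using hCn
        have hWdisj : ∀ n m, n ≠ m → Disjoint ((g n).1) ((g m).1) :=
          fun n m hnm => hHdisj (g n).2 (g m).2 (hginj n m hnm)
        refine ⟨⋃ n, Cn n, union_cell hWdisj hCn1,
          le_antisymm (cell_le_weight (union_cell hWdisj hCn1))
            (hsupk.trans (union_cell_card (fun n => (hCn2 n).le)))⟩

end Metric
end Stmt9Aux

open Stmt9Aux in
/-- If `X` is a metric space and `B` is a π-base for `X` (a family of nonempty open
sets such that every nonempty open set contains a member), then there is a maximal
cellular family `S ⊆ B` with `|S| = w(X)`. -/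
theorem stmt_9 {X : Type*} [MetricSpace X] (B : Set (Set X))
    (hB : ∀ U ∈ B, IsOpen U ∧ U.Nonempty)
    (hπ : ∀ V : Set X, IsOpen V → V.Nonempty → ∃ U ∈ B, U ⊆ V) :
    ∃ S : Set (Set X), S ⊆ B ∧
      (∀ U ∈ S, IsOpen U ∧ U.Nonempty) ∧ S.Pairwise Disjoint ∧
      (∀ V : Set X, IsOpen V → V.Nonempty → ∃ U ∈ S, (V ∩ U).Nonempty) ∧
      Cardinal.mk S = topWeight X := by
  obtain ⟨C, hC, hCc⟩ := exists_cell_weight (X := X)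
  -- transfer C into B
  have htr : ∀ V : ↥C, ∃ u : Set X, u ∈ B ∧ u ⊆ (V : Set X) := by
    rintro ⟨V, hV⟩
    obtain ⟨u, hu, huV⟩ := hπ V (hC.1 V hV).1 (hC.1 V hV).2.1
    exact ⟨u, hu, huV⟩
  choose t ht1 ht2 using htr
  have htne : ∀ V : ↥C, (t V).Nonempty := fun V => (hB _ (ht1 V)).2
  have htinj : Function.Injective t := by
    intro V V' heq
    by_contra hne
    have hVV : (V : Set X) ≠ (V' : Set X) := fun h => hne (Subtype.ext h)
    have hd := (hC.2 V.2 V'.2 hVV).mono (ht2 V) (heq ▸ ht2 V')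
    exact (htne V).ne_empty (disjoint_self.1 hd)
  set C' : Set (Set X) := Set.range t with hC'def
  have hC'B : C' ⊆ B := by rintro u ⟨V, rfl⟩; exact ht1 V
  have hC'card : #C' = topWeight X := by
    rw [hC'def, mk_range_eq t htinj, hCc]
  have hC'disj : C'.Pairwise Disjoint := by
    rintro u ⟨V, rfl⟩ u' ⟨V', rfl⟩ hne
    have hVV : (V : Set X) ≠ (V' : Set X) := by
      intro h
      exact hne (by
        have : V = V' := Subtype.ext h
        rw [this])
    exact (hC.2 V.2 V'.2 hVV).mono (ht2 V) (ht2 V')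
  -- Zorn
  set P : Set (Set (Set X)) := {T | T ⊆ B ∧ T.Pairwise Disjoint} with hPdef
  have hC'P : C' ∈ P := ⟨hC'B, hC'disj⟩
  obtain ⟨S, hSC', hSmax⟩ := zorn_subset_nonempty P (by
    intro c hcP hchain hcne
    refine ⟨⋃₀ c, ⟨?_, ?_⟩, fun s hs => subset_sUnion_of_mem hs⟩
    · rintro u ⟨T, hTc, huT⟩
      exact (hcP hTc).1 huT
    · intro u hu v hv huv
      obtain ⟨T, hTc, huT⟩ := hu
      obtain ⟨T', hT'c, hvT'⟩ := hv
      rcases hchain.total hTc hT'c with h | h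
      · exact (hcP hT'c).2 (h huT) hvT' huv
      · exact (hcP hTc).2 huT (h hvT') huv) C' hC'P
  refine ⟨S, hSmax.1.1, fun U hU => hB U (hSmax.1.1 hU), hSmax.1.2, ?_, ?_⟩
  · intro V hVo hVne
    by_contra hcon
    push_neg at hcon
    obtain ⟨u0, hu0B, hu0V⟩ := hπ V hVo hVne
    have hu0ne : u0.Nonempty := (hB u0 hu0B).2
    have hins : insert u0 S ∈ P := by
      constructor
      · rintro u (rfl | hu)
        · exact hu0B
        · exact hSmax.1.1 hu
      · apply hSmax.1.2.insert
        intro U hU _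
        have hd : Disjoint u0 U := by
          rw [Set.disjoint_left]
          intro z hz1 hz2
          have : z ∈ V ∩ U := ⟨hu0V hz1, hz2⟩
          rw [hcon U hU] at this
          exact this
        exact ⟨hd, hd.symm⟩
    have hu0S : u0 ∈ S := hSmax.2 hins (subset_insert _ _) (mem_insert _ _)
    have := hcon u0 hu0S
    rw [inter_eq_self_of_subset_right hu0V] at this
    exact hu0ne.ne_empty this
  · have hScell : CellIn (univ : Set X) S :=
      ⟨fun U hU => ⟨(hB U (hSmax.1.1 hU)).1, (hB U (hSmax.1.1 hU)).2, subset_univ _⟩, hSmax.1.2⟩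
    have h1 : #S ≤ topWeight X := cell_le_weight hScell
    have h2 : topWeight X ≤ #S := by
      rw [← hC'card]
      exact mk_le_mk_of_subset hSC'
    exact le_antisymm h1 h2
end

section
/- If Z ⊆ κ^ω with |Z| < cf[κ]^ω, then Z is meager in κ^ω. Hence non(M_{κ^ω}) ≥ cf[κ]^ω. -/
open Set

lemma aux_meagre_13 {K : Type*} [TopologicalSpace K] [DiscreteTopology K] [Infinite K] (a : K) :
    IsMeagre {x : ℕ → K | a ∉ Set.range x} := by
  rw [IsMeagre]
  apply residual_of_dense_open
  · have : {x : ℕ → K | a ∉ Set.range x}ᶜ = ⋃ n, (fun x : ℕ → K => x n) ⁻¹' {a} := by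
      ext x
      simp [Set.range, eq_comm]
    rw [this]
    exact isOpen_iUnion fun n => (continuous_apply n).isOpen_preimage _ (isOpen_discrete _)
  · rw [dense_iff_inter_open]
    rintro U hU ⟨x, hx⟩
    obtain ⟨I, u, hu, hsub⟩ := isOpen_pi_iff.1 hU x hx
    obtain ⟨n, hn⟩ := Infinite.exists_notMem_finset I
    refine ⟨Function.update x n a, hsub fun i hi => ?_, ?_⟩
    · rw [Function.update_of_ne (by rintro rfl; exact hn hi)]
      exact (hu i hi).2
    · simp only [mem_compl_iff, mem_setOf_eq, not_not]
      exact ⟨n, Function.update_self n a x⟩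

lemma aux_univ_13 {K : Type*} [TopologicalSpace K] [DiscreteTopology K] [Infinite K] :
    ¬ IsMeagre (Set.univ : Set (ℕ → K)) := by
  intro h
  letI : MetricSpace (ℕ → K) := PiNat.metricSpace (E := fun _ => K)
  haveI : CompleteSpace (ℕ → K) := PiNat.completeSpace
  rw [IsMeagre, compl_univ] at h
  have : Dense (∅ : Set (ℕ → K)) := dense_of_mem_residual h
  exact (this.nonempty).ne_empty rfl

/-- Any subset of `K^ω` of cardinality less than `cf [K]^ω` is meager; hence the
uniformity of the meager ideal of `K^ω` is at least `cf [K]^ω`. Here `K` is an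
infinite discrete space and `cf [K]^ω` is the least cardinality of a family of
countably infinite subsets of `K` such that every countable subset of `K` is
contained in a member. -/
theorem stmt_13 {K : Type*} [TopologicalSpace K] [DiscreteTopology K] [Infinite K] :
    (∀ Z : Set (ℕ → K),
      Cardinal.mk Z < sInf {c : Cardinal | ∃ F : Set (Set K),
        (∀ A ∈ F, A.Countable ∧ A.Infinite) ∧
        (∀ A : Set K, A.Countable → ∃ B ∈ F, A ⊆ B) ∧ Cardinal.mk F = c} →
      IsMeagre Z) ∧
    sInf {c : Cardinal | ∃ F : Set (Set K),
        (∀ A ∈ F, A.Countable ∧ A.Infinite) ∧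
        (∀ A : Set K, A.Countable → ∃ B ∈ F, A ⊆ B) ∧ Cardinal.mk F = c}
      ≤ sInf {c : Cardinal | ∃ Z : Set (ℕ → K), ¬ IsMeagre Z ∧ Cardinal.mk Z = c} := by
  classical
  have key : ∀ Z : Set (ℕ → K),
      Cardinal.mk Z < sInf {c : Cardinal | ∃ F : Set (Set K),
        (∀ A ∈ F, A.Countable ∧ A.Infinite) ∧
        (∀ A : Set K, A.Countable → ∃ B ∈ F, A ⊆ B) ∧ Cardinal.mk F = c} →
      IsMeagre Z := by
    intro Z hZ
    set B₀ : Set K := Set.range (Infinite.natEmbedding K) with hB₀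
    have hB₀c : B₀.Countable := Set.countable_range _
    have hB₀i : B₀.Infinite :=
      Set.infinite_range_of_injective (Infinite.natEmbedding K).injective
    set F : Set (Set K) := (fun z : ℕ → K => Set.range z ∪ B₀) '' Z with hF
    have hcard : Cardinal.mk F ≤ Cardinal.mk Z := Cardinal.mk_image_le
    have hforall : ∀ A ∈ F, A.Countable ∧ A.Infinite := by
      rintro A ⟨z, hz, rfl⟩
      exact ⟨(Set.countable_range z).union hB₀c, hB₀i.mono Set.subset_union_right⟩
    have hnotmem : Cardinal.mk F ∉ {c : Cardinal | ∃ F : Set (Set K),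
        (∀ A ∈ F, A.Countable ∧ A.Infinite) ∧
        (∀ A : Set K, A.Countable → ∃ B ∈ F, A ⊆ B) ∧ Cardinal.mk F = c} := fun hmem =>
      absurd (csInf_le (OrderBot.bddBelow _) hmem) (not_le.2 (lt_of_le_of_lt hcard hZ))
    have hA : ∃ A : Set K, A.Countable ∧ ∀ B ∈ F, ¬ A ⊆ B := by
      by_contra h
      push_neg at h
      exact hnotmem ⟨F, hforall, fun A hAc => h A hAc, rfl⟩
    obtain ⟨A, hAc, hAn⟩ := hA
    have hsub : Z ⊆ ⋃ a ∈ A, {x : ℕ → K | a ∉ Set.range x} := by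
      intro z hz
      have hns := hAn (Set.range z ∪ B₀) ⟨z, hz, rfl⟩
      rw [Set.not_subset] at hns
      obtain ⟨a, haA, haB⟩ := hns
      exact Set.mem_biUnion haA fun h => haB (Set.mem_union_left _ h)
    have hmeag : IsMeagre (⋃ a ∈ A, {x : ℕ → K | a ∉ Set.range x}) := by
      rw [IsMeagre, Set.compl_iUnion₂]
      exact (countable_bInter_mem hAc).2 fun a _ => aux_meagre_13 a
    exact hmeag.mono hsub
  refine ⟨key, le_csInf ⟨Cardinal.mk (Set.univ : Set (ℕ → K)), Set.univ, aux_univ_13, rfl⟩ ?_⟩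
  rintro c ⟨Z, hZmeag, rfl⟩
  by_contra h
  push_neg at h
  exact hZmeag (key Z h)
end

section
/- Let X and Y be completely metrizable spaces and π_Y : X × Y → Y the projection. A set A ⊆ Y is meager in Y if and only if π_Y^{-1}(A) is meager in X × Y. -/
open Set Metric

section AuxKU

/-- Any family of sets indexed by `w` has a maximal pairwise-disjoint subfamily of any
candidate set, and it meets every nonempty candidate. -/
lemma exists_maximal_disjoint_family {α β : Type*} (w : α → Set β) (C : Set α) :
    ∃ M, M ⊆ C ∧ (M.Pairwise fun p q => Disjoint (w p) (w q)) ∧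
      ∀ q ∈ C, (w q).Nonempty → ∃ p ∈ M, ((w q) ∩ (w p)).Nonempty := by
  have hchaincond : ∀ c ⊆ {T : Set α | T ⊆ C ∧ T.Pairwise fun p q => Disjoint (w p) (w q)},
      IsChain (· ⊆ ·) c → ∃ ub ∈ {T : Set α | T ⊆ C ∧ T.Pairwise fun p q => Disjoint (w p) (w q)},
        ∀ s ∈ c, s ⊆ ub := by
    intro c hcS hchain
    refine ⟨⋃₀ c, ⟨sUnion_subset fun s hs => (hcS hs).1, ?_⟩, fun s hs => subset_sUnion_of_mem hs⟩
    intro p hp q hq hne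
    obtain ⟨s, hs, hps⟩ := hp
    obtain ⟨t, ht, hqt⟩ := hq
    rcases hchain.total hs ht with h | h
    · exact (hcS ht).2 (h hps) hqt hne
    · exact (hcS hs).2 hps (h hqt) hne
  obtain ⟨M, hM⟩ := zorn_subset
      {T : Set α | T ⊆ C ∧ T.Pairwise fun p q => Disjoint (w p) (w q)} hchaincond
  · obtain ⟨hMC, hMd⟩ := hM.prop
    refine ⟨M, hMC, hMd, fun q hqC hqne => ?_⟩
    by_cases hqM : q ∈ M
    · exact ⟨q, hqM, by simpa using hqne⟩
    by_contra hcon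
    push_neg at hcon
    have hdisj : ∀ p ∈ M, Disjoint (w q) (w p) := by
      intro p hp
      rw [Set.disjoint_iff_inter_eq_empty]
      exact hcon p hp
    have hins : insert q M ∈
        {T : Set α | T ⊆ C ∧ T.Pairwise fun p q => Disjoint (w p) (w q)} := by
      refine ⟨insert_subset hqC hMC, Set.pairwise_insert.2 ⟨hMd, fun p hp _ => ⟨hdisj p hp, (hdisj p hp).symm⟩⟩⟩
    have := hM.2 hins (subset_insert _ _)
    exact hqM (this (mem_insert _ _))

/-- Extension lemma: inside any open box `ball x r ×ˢ W`, one can find a smaller box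
avoiding the complement of the open dense set `D`, with closed-ball nesting and
arbitrarily small radius. -/
lemma exists_extension_KU {X Y : Type*} [MetricSpace X] [MetricSpace Y]
    {D : Set (X × Y)} (hDo : IsOpen D) (hDd : Dense D)
    (x : X) {r : ℝ} (hr : 0 < r) {W : Set Y} (hWo : IsOpen W) (hWne : W.Nonempty)
    {δ : ℝ} (hδ : 0 < δ) :
    ∃ (x' : X) (r' : ℝ) (W' : Set Y), 0 < r' ∧ r' ≤ δ ∧ IsOpen W' ∧ W'.Nonempty ∧
      closedBall x' r' ⊆ ball x r ∧ W' ⊆ W ∧ ball x' r' ×ˢ W' ⊆ D := by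
  have hbox : IsOpen (ball x r ×ˢ W) := isOpen_ball.prod hWo
  have hboxne : (ball x r ×ˢ W).Nonempty := (nonempty_ball.2 hr).prod hWne
  obtain ⟨z, hzD, hzbox⟩ := hDd.exists_mem_open hbox hboxne
  obtain ⟨ε, hε, hball⟩ := Metric.isOpen_iff.1 (hDo.inter hbox) z ⟨hzD, hzbox⟩
  have hz1 : z.1 ∈ ball x r := hzbox.1
  have hz2 : z.2 ∈ W := hzbox.2
  have hd : dist z.1 x < r := mem_ball.1 hz1
  set r' := min (min (ε / 2) δ) ((r - dist z.1 x) / 2) with hr'def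
  have hr'pos : 0 < r' := lt_min (lt_min (by linarith) hδ) (by linarith)
  refine ⟨z.1, r', ball z.2 ε ∩ W, hr'pos, (min_le_left _ _).trans (min_le_right _ _),
    isOpen_ball.inter hWo, ⟨z.2, mem_ball_self hε, hz2⟩, ?_, inter_subset_right, ?_⟩
  · intro a ha
    have h1 : dist a z.1 ≤ r' := mem_closedBall.1 ha
    have h2 : r' ≤ (r - dist z.1 x) / 2 := min_le_right _ _
    have h3 : dist a x ≤ dist a z.1 + dist z.1 x := dist_triangle _ _ _
    exact mem_ball.2 (by linarith)
  · rintro ⟨a, b⟩ ⟨ha, hb, -⟩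
    have hr'ε : r' < ε := lt_of_le_of_lt ((min_le_left _ _).trans (min_le_left _ _)) (by linarith)
    have : (a, b) ∈ ball z ε := by
      rw [← ball_prod_same]
      exact ⟨mem_ball.2 (lt_of_lt_of_le (mem_ball.1 ha) hr'ε.le), hb⟩
    exact (hball this).1

end AuxKU

/-- Kuratowski–Ulam-type lemma: for completely metrizable spaces `X` (nonempty) and
`Y`, with `π_Y : X × Y → Y` the projection, a set `A ⊆ Y` is meager in `Y` if and
only if `π_Y⁻¹(A)` is meager in `X × Y`. -/
theorem stmt_15 {X Y : Type*} [MetricSpace X] [CompleteSpace X] [Nonempty X]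
    [MetricSpace Y] [CompleteSpace Y] (A : Set Y) :
    IsMeagre A ↔ IsMeagre (Prod.snd ⁻¹' A : Set (X × Y)) := by
  constructor
  · intro h
    exact h.preimage_of_isOpenMap continuous_snd isOpenMap_snd
  · intro h
    classical
    -- unpack the meagerness of the preimage into countably many dense open sets
    obtain ⟨S, hSo, hSd, hSc, hSsub⟩ := mem_residual_iff.1 h
    obtain ⟨f, hf⟩ := (hSc.insert univ).exists_eq_range (insert_nonempty _ _)
    set U : ℕ → Set (X × Y) := f with hU
    have hUmem : ∀ n, U n ∈ insert univ S := fun n => hf ▸ mem_range_self n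
    have hUo : ∀ n, IsOpen (U n) := by
      intro n
      rcases hUmem n with h' | h'
      · rw [h']; exact isOpen_univ
      · exact hSo _ h'
    have hUd : ∀ n, Dense (U n) := by
      intro n
      rcases hUmem n with h' | h'
      · rw [h']; exact dense_univ
      · exact hSd _ h'
    have hUsub : ∀ z : X × Y, (∀ n, z ∈ U n) → z.2 ∉ A := by
      intro z hz hzA
      have hzS : z ∈ ⋂₀ S := by
        intro t ht
        have : t ∈ insert univ S := mem_insert_of_mem _ ht
        rw [hf] at this
        obtain ⟨n, rfl⟩ := this
        exact hz n
      exact hSsub hzS hzA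
    -- finite intersections
    set V : ℕ → Set (X × Y) := fun n => Nat.rec (U 0) (fun k Vk => Vk ∩ U (k + 1)) n with hV
    have hVo : ∀ n, IsOpen (V n) := by
      intro n
      induction n with
      | zero => exact hUo 0
      | succ k ih => exact ih.inter (hUo (k + 1))
    have hVd : ∀ n, Dense (V n) := by
      intro n
      induction n with
      | zero => exact hUd 0
      | succ k ih => exact ih.inter_of_isOpen_left (hUd (k + 1)) (hVo k)
    have hVU : ∀ n, V n ⊆ U n := by
      intro n
      cases n with
      | zero => exact subset_rfl
      | succ k => exact inter_subset_right
    -- good nodes at level n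
    set good : ℕ → X × ℝ × Set Y → Prop := fun n p =>
      0 < p.2.1 ∧ p.2.1 ≤ (2 : ℝ)⁻¹ ^ n ∧ IsOpen p.2.2 ∧ p.2.2.Nonempty ∧
        ball p.1 p.2.1 ×ˢ p.2.2 ⊆ V n with hgooddef
    have key : ∀ (n : ℕ) (x : X) (r : ℝ), 0 < r → ∀ W : Set Y, IsOpen W → W.Nonempty →
        ∃ q : X × ℝ × Set Y, good n q ∧ closedBall q.1 q.2.1 ⊆ ball x r ∧ q.2.2 ⊆ W := by
      intro n x r hr W hWo hWne
      obtain ⟨x', r', W', h1, h2, h3, h4, h5, h6, h7⟩ :=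
        exists_extension_KU (hVo n) (hVd n) x hr hWo hWne (δ := (2 : ℝ)⁻¹ ^ n) (by positivity)
      exact ⟨(x', r', W'), ⟨h1, h2, h3, h4, h7⟩, h5, h6⟩
    -- maximal disjoint families
    have hmd := fun C : Set (X × ℝ × Set Y) =>
      exists_maximal_disjoint_family (fun p => p.2.2) C
    choose maxD hsubC hdisjD hmaxP using hmd
    set Cand : ℕ → Set (X × ℝ × Set Y) → Set (X × ℝ × Set Y) := fun n T =>
      {q | good (n + 1) q ∧ ∃ p ∈ T, closedBall q.1 q.2.1 ⊆ ball p.1 p.2.1 ∧ q.2.2 ⊆ p.2.2}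
      with hCand
    set T : ℕ → Set (X × ℝ × Set Y) := fun n =>
      Nat.rec (maxD {p | good 0 p}) (fun k Tk => maxD (Cand k Tk)) n with hT
    have hTgood : ∀ n p, p ∈ T n → good n p := by
      intro n p hp
      cases n with
      | zero => exact hsubC _ hp
      | succ k => exact (hsubC _ hp).1
    have hTdisj : ∀ n, (T n).Pairwise fun p q => Disjoint p.2.2 q.2.2 := by
      intro n
      cases n with
      | zero => exact hdisjD _
      | succ k => exact hdisjD _
    -- the unions of the chosen open sets at each level
    set Un : ℕ → Set Y := fun n => ⋃ p ∈ T n, p.2.2 with hUn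
    have hUnOpen : ∀ n, IsOpen (Un n) :=
      fun n => isOpen_biUnion fun p hp => (hTgood n p hp).2.2.1
    have hUn0dense : Dense (Un 0) := by
      rw [dense_iff_inter_open]
      intro O hOo hOne
      by_contra hcon
      rw [not_nonempty_iff_eq_empty] at hcon
      obtain ⟨q, hq, -, hqW⟩ := key 0 (Classical.arbitrary X) 1 one_pos O hOo hOne
      obtain ⟨p, hpT, y, hyq, hyp⟩ := hmaxP {p | good 0 p} q hq hq.2.2.2.1
      have : y ∈ O ∩ Un 0 := ⟨hqW hyq, mem_biUnion hpT hyp⟩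
      rw [hcon] at this
      exact this
    -- the successive "unresolved" sets are nowhere dense
    set Mset : ℕ → Set Y := fun n => Un n \ Un (n + 1) with hMset
    have hMnwd : ∀ n, IsNowhereDense (Mset n) := by
      intro n
      rw [IsNowhereDense, eq_empty_iff_forall_notMem]
      intro y0 hy0
      set O := interior (closure (Mset n)) with hO
      have hOo : IsOpen O := isOpen_interior
      have hOsub : O ⊆ closure (Mset n) := interior_subset
      have hOM : ∀ O', O' ⊆ O → IsOpen O' → O'.Nonempty → (O' ∩ Mset n).Nonempty := by
        rintro O' hO'O hO'o ⟨z, hz⟩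
        have hzc : z ∈ closure (Mset n) := hOsub (hO'O hz)
        exact mem_closure_iff.1 hzc O' hO'o hz
      obtain ⟨y, hyO, hyM⟩ := hOM O subset_rfl hOo ⟨y0, hy0⟩
      obtain ⟨hyUn, hyNot⟩ := hyM
      obtain ⟨p, hpT, hyp⟩ := mem_iUnion₂.1 hyUn
      have hO'o : IsOpen (O ∩ p.2.2) := hOo.inter (hTgood n p hpT).2.2.1
      have hO'ne : (O ∩ p.2.2).Nonempty := ⟨y, hyO, hyp⟩
      have hmeet : ((O ∩ p.2.2) ∩ Un (n + 1)).Nonempty := by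
        by_contra hcon
        rw [not_nonempty_iff_eq_empty] at hcon
        obtain ⟨q, hq, hqball, hqW⟩ :=
          key (n + 1) p.1 p.2.1 (hTgood n p hpT).1 _ hO'o hO'ne
        have hqC : q ∈ Cand n (T n) :=
          ⟨hq, p, hpT, hqball, hqW.trans inter_subset_right⟩
        obtain ⟨p', hp'T, y', hy'q, hy'p'⟩ := hmaxP (Cand n (T n)) q hqC hq.2.2.2.1
        have : y' ∈ (O ∩ p.2.2) ∩ Un (n + 1) := ⟨hqW hy'q, mem_biUnion hp'T hy'p'⟩
        rw [hcon] at this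
        exact this
      obtain ⟨z, hzO'', hzM⟩ := hOM ((O ∩ p.2.2) ∩ Un (n + 1))
        ((inter_subset_left.trans inter_subset_left)) (hO'o.inter (hUnOpen (n + 1))) hmeet
      exact hzM.2 hzO''.2
    -- A is covered
    have hcover : A ⊆ (Un 0)ᶜ ∪ ⋃ n, Mset n := by
      intro y hyA
      by_contra hy
      rw [mem_union, not_or] at hy
      obtain ⟨hy0, hyM⟩ := hy
      have hy0' : y ∈ Un 0 := not_not.1 hy0
      have hyMn : ∀ n, y ∈ Un n → y ∈ Un (n + 1) := by
        intro n hn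
        by_contra h'
        exact hyM (mem_iUnion.2 ⟨n, hn, h'⟩)
      have hUnAll : ∀ n, y ∈ Un n := fun n => Nat.rec hy0' (fun k ih => hyMn k ih) n
      have hstep : ∀ (n : ℕ) (p : X × ℝ × Set Y), p ∈ T n → y ∈ p.2.2 →
          ∃ q : X × ℝ × Set Y, q ∈ T (n + 1) ∧ y ∈ q.2.2 ∧
            closedBall q.1 q.2.1 ⊆ ball p.1 p.2.1 := by
        intro n p hp hyp
        obtain ⟨q, hqT, hyq⟩ := mem_iUnion₂.1 (hUnAll (n + 1))
        have hqC : q ∈ Cand n (T n) := hsubC _ hqT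
        obtain ⟨hgq, p', hp'T, hball, hWsub⟩ := hqC
        rcases eq_or_ne p' p with rfl | hne
        · exact ⟨q, hqT, hyq, hball⟩
        · exact absurd hyp (Set.disjoint_left.1 (hTdisj n hp'T hp hne) (hWsub hyq))
      choose! next hnextT hnextY hnextB using hstep
      obtain ⟨p0, hp0T, hyp0⟩ := mem_iUnion₂.1 hy0'
      set ps : ℕ → X × ℝ × Set Y := fun n => Nat.rec p0 (fun k pk => next k pk) n with hps0
      have hps : ∀ n, ps n ∈ T n ∧ y ∈ (ps n).2.2 := by
        intro n
        induction n with
        | zero => exact ⟨hp0T, hyp0⟩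
        | succ k ih => exact ⟨hnextT k (ps k) ih.1 ih.2, hnextY k (ps k) ih.1 ih.2⟩
      have hball : ∀ n, closedBall (ps (n + 1)).1 (ps (n + 1)).2.1 ⊆ ball (ps n).1 (ps n).2.1 :=
        fun n => hnextB n (ps n) (hps n).1 (hps n).2
      have hgoodn : ∀ n, good n (ps n) := fun n => hTgood n _ (hps n).1
      have hrpos : ∀ n, 0 < (ps n).2.1 := fun n => (hgoodn n).1
      have hrle : ∀ n, (ps n).2.1 ≤ (2 : ℝ)⁻¹ ^ n := fun n => (hgoodn n).2.1
      have hmemball : ∀ n, (ps (n + 1)).1 ∈ ball (ps n).1 (ps n).2.1 :=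
        fun n => hball n (mem_closedBall_self (hrpos (n + 1)).le)
      have hcauchy : CauchySeq (fun n => (ps n).1) := by
        apply cauchySeq_of_le_geometric (2 : ℝ)⁻¹ 1 (by norm_num)
        intro n
        rw [dist_comm, one_mul]
        exact le_trans (mem_ball.1 (hmemball n)).le (hrle n)
      obtain ⟨xs, hxs⟩ := cauchySeq_tendsto_of_complete hcauchy
      have hnested : ∀ n m, n ≤ m →
          closedBall (ps m).1 (ps m).2.1 ⊆ closedBall (ps n).1 (ps n).2.1 := by
        intro n m hnm
        induction m, hnm using Nat.le_induction with
        | base => exact subset_rfl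
        | succ m hm ih => exact ((hball m).trans ball_subset_closedBall).trans ih
      have hxstar : ∀ n, xs ∈ closedBall (ps n).1 (ps n).2.1 := by
        intro n
        refine Metric.isClosed_closedBall.mem_of_tendsto hxs ?_
        filter_upwards [Filter.eventually_ge_atTop n] with m hm
        exact hnested n m hm (mem_closedBall_self (hrpos m).le)
      have hxball : ∀ n, xs ∈ ball (ps n).1 (ps n).2.1 := fun n => hball n (hxstar (n + 1))
      have hVmem : ∀ n, (xs, y) ∈ V n :=
        fun n => (hgoodn n).2.2.2.2 (Set.mk_mem_prod (hxball n) (hps n).2)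
      exact absurd hyA (hUsub (xs, y) fun n => hVU n (hVmem n))
    -- conclude
    rw [isMeagre_iff_countable_union_isNowhereDense]
    refine ⟨insert (Un 0)ᶜ (Set.range Mset), ?_, (countable_range Mset).insert _, ?_⟩
    · intro t ht
      rcases ht with rfl | ⟨n, rfl⟩
      · rw [IsNowhereDense, IsClosed.closure_eq (hUnOpen 0).isClosed_compl]
        exact hUn0dense.interior_compl
      · exact hMnwd n
    · intro y hy
      rcases hcover hy with h' | h'
      · exact ⟨(Un 0)ᶜ, mem_insert _ _, h'⟩
      · obtain ⟨n, hn⟩ := mem_iUnion.1 h'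
        exact ⟨Mset n, mem_insert_of_mem _ (mem_range_self n), hn⟩
end

section
/- For any infinite cardinal κ, cof(ω^κ, ≤) ≤ cof(NWD_{κ^ω}), where ω^κ is the set of functions κ → ω ordered pointwise and cof denotes cofinality of the poset, and NWD_{κ^ω} is the ideal of nowhere dense subsets of the product space κ^ω ordered by inclusion. -/
open Set Filter

section Aux

variable {K : Type*} [TopologicalSpace K] [DiscreteTopology K]

set_option linter.unusedSectionVars false

/-- The cylinder of radius `n` around `x`. -/
def cyl18 (x : ℕ → K) (n : ℕ) : Set (ℕ → K) := {y | ∀ m < n, y m = x m}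

lemma cyl18_mem_nhds (x : ℕ → K) (n : ℕ) : cyl18 x n ∈ nhds x := by
  have : cyl18 x n = ⋂ m ∈ Finset.range n, (fun y : ℕ → K => y m) ⁻¹' {x m} := by
    ext y; simp [cyl18]
  rw [this]
  refine Filter.biInter_finset_mem _ |>.2 fun m _ => ?_
  exact (continuous_apply m).continuousAt.preimage_mem_nhds
    ((isOpen_discrete ({x m} : Set K)).mem_nhds rfl)

lemma exists_cyl18_subset {x : ℕ → K} {U : Set (ℕ → K)} (hU : U ∈ nhds x) :
    ∃ n, cyl18 x n ⊆ U := by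
  rw [nhds_pi, Filter.mem_pi] at hU
  obtain ⟨I, hI, t, ht, hsub⟩ := hU
  obtain ⟨n, hn⟩ := hI.bddAbove
  refine ⟨n + 1, fun y hy => hsub fun i hi => ?_⟩
  have : y i = x i := hy i (Nat.lt_succ_of_le (hn hi))
  rw [this]
  exact mem_of_mem_nhds (ht i)

/-- `g_E`: the minimal `n` such that some cylinder of length `n` starting with `α`
misses `E`. -/
noncomputable def gfun18 (E : Set (ℕ → K)) (α : K) : ℕ :=
  sInf {n : ℕ | ∃ x : ℕ → K, x 0 = α ∧ ∀ y : ℕ → K, (∀ m < n, y m = x m) → y ∉ E}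

/-- The set defining `gfun18` is nonempty when `E` is nowhere dense. -/
lemma gfun18_set_nonempty {E : Set (ℕ → K)} (hE : IsNowhereDense E) (α : K) :
    {n : ℕ | ∃ x : ℕ → K, x 0 = α ∧ ∀ y : ℕ → K, (∀ m < n, y m = x m) → y ∉ E}.Nonempty := by
  -- the open set {y | y 0 = α} is not contained in closure E
  have hopen : IsOpen {y : ℕ → K | y 0 = α} := by
    have : {y : ℕ → K | y 0 = α} = (fun y : ℕ → K => y 0) ⁻¹' {α} := rfl
    rw [this]
    exact (continuous_apply 0).isOpen_preimage _ (isOpen_discrete _)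
  have hne : ¬ ({y : ℕ → K | y 0 = α} ⊆ closure E) := by
    intro h
    have : (fun _ : ℕ => α) ∈ interior (closure E) :=
      mem_interior.2 ⟨_, h, hopen, rfl⟩
    rw [hE] at this
    exact this
  obtain ⟨x, hx0, hxE⟩ := not_subset.1 hne
  have hU : (closure E)ᶜ ∈ nhds x := (isClosed_closure.isOpen_compl).mem_nhds hxE
  obtain ⟨n, hn⟩ := exists_cyl18_subset hU
  exact ⟨n, x, hx0, fun y hy hyE => hn hy (subset_closure hyE)⟩

variable (k₀ : K)

/-- The nowhere dense set `K_f`. -/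
def Kf18 (f : K → ℕ) : Set (ℕ → K) := {x | ∀ n, f (x 0) < n → x n = k₀}

lemma Kf18_closed (f : K → ℕ) : IsClosed (Kf18 k₀ f) := by
  rw [← isOpen_compl_iff, isOpen_iff_mem_nhds]
  intro x hx
  simp only [Kf18, mem_compl_iff, mem_setOf_eq, not_forall] at hx
  obtain ⟨n, hn, hne⟩ := hx
  refine Filter.mem_of_superset (cyl18_mem_nhds x (n + 1)) fun y hy => ?_
  simp only [Kf18, mem_compl_iff, mem_setOf_eq, not_forall]
  have h0 : y 0 = x 0 := hy 0 (Nat.succ_pos n)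
  have hn' : y n = x n := hy n (Nat.lt_succ_self n)
  exact ⟨n, by rw [h0]; exact hn, by rw [hn']; exact hne⟩

lemma Kf18_nowhereDense {k₁ : K} (hk : k₁ ≠ k₀) (f : K → ℕ) :
    IsNowhereDense (Kf18 k₀ f) := by
  rw [(Kf18_closed k₀ f).isNowhereDense_iff]
  rw [eq_empty_iff_forall_notMem]
  intro x hx
  obtain ⟨n, hn⟩ := exists_cyl18_subset (mem_interior_iff_mem_nhds.1 hx)
  set m := max (n + 1) (f (x 0) + 1) with hm
  set y := Function.update x m k₁ with hy
  have hym : y ∈ cyl18 x n := fun i hi => by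
    apply Function.update_of_ne
    omega
  have hyK : y ∈ Kf18 k₀ f := hn hym
  have hy0 : y 0 = x 0 := Function.update_of_ne (by omega) _ _
  have : y m = k₀ := hyK m (by rw [hy0]; omega)
  rw [hy, Function.update_self] at this
  exact hk this

lemma le_gfun18 {E : Set (ℕ → K)} (hE : IsNowhereDense E) (f : K → ℕ)
    (hsub : Kf18 k₀ f ⊆ E) : f ≤ gfun18 E := by
  intro α
  refine le_csInf (gfun18_set_nonempty hE α) fun n hn => ?_
  obtain ⟨x, hx0, hx⟩ := hn
  rcases Nat.eq_zero_or_pos n with rfl | h0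
  · -- then E is empty, but const k₀ ∈ K_f ⊆ E
    exact absurd (hsub (show (fun _ => k₀) ∈ Kf18 k₀ f from fun m _ => rfl))
      (hx _ (fun m hm => absurd hm (Nat.not_lt_zero m)))
  by_contra hlt
  push_neg at hlt
  -- n < f α; build y ∈ K_f agreeing with x below n
  set y : ℕ → K := fun m => if m < n then x m else k₀ with hy
  have hyn : ∀ m < n, y m = x m := fun m hm => if_pos hm
  have hy0 : y 0 = α := by rw [hyn 0 h0, hx0]
  have : y ∈ Kf18 k₀ f := by
    intro m hm
    rw [hy0] at hm
    have : ¬ m < n := not_lt.2 (le_of_lt (lt_trans hlt hm))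
    simp [hy, this]
  exact hx y hyn (hsub this)

end Aux

/-- The cofinality of the poset `(ω^K, ≤)` of functions `K → ℕ` ordered pointwise is
at most the cofinality of the ideal of nowhere dense subsets of `K^ω`. -/
theorem stmt_18 {K : Type*} [TopologicalSpace K] [DiscreteTopology K] [Infinite K] :
    sInf {c : Cardinal | ∃ F : Set (K → ℕ),
        (∀ g : K → ℕ, ∃ f ∈ F, g ≤ f) ∧ Cardinal.mk F = c}
      ≤ sInf {c : Cardinal | ∃ F : Set (Set (ℕ → K)), (∀ s ∈ F, IsNowhereDense s) ∧
          (∀ s : Set (ℕ → K), IsNowhereDense s → ∃ t ∈ F, s ⊆ t) ∧ Cardinal.mk F = c} := by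
  obtain ⟨k₁, k₀, hk⟩ := Infinite.instNontrivial K
  refine le_csInf ⟨Cardinal.mk {s : Set (ℕ → K) | IsNowhereDense s},
    {s | IsNowhereDense s}, fun s hs => hs, fun s hs => ⟨s, hs, subset_rfl⟩, rfl⟩ ?_
  rintro c ⟨F, hNWD, hcof, rfl⟩
  set G : Set (K → ℕ) := gfun18 '' F with hG
  have hdom : ∀ g : K → ℕ, ∃ f ∈ G, g ≤ f := by
    intro g
    obtain ⟨t, htF, hsub⟩ := hcof (Kf18 k₀ g) (Kf18_nowhereDense k₀ hk g)
    exact ⟨gfun18 t, ⟨t, htF, rfl⟩, le_gfun18 k₀ (hNWD t htF) g hsub⟩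
  calc sInf {c : Cardinal | ∃ F : Set (K → ℕ),
        (∀ g : K → ℕ, ∃ f ∈ F, g ≤ f) ∧ Cardinal.mk F = c}
      ≤ Cardinal.mk G := csInf_le (OrderBot.bddBelow _) ⟨G, hdom, rfl⟩
    _ ≤ Cardinal.mk F := Cardinal.mk_image_le
end
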